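/- arXiv:1601.08012 — 4 statements merged into one kernel-verified Lean document; each statement's English description precedes it below -/
import Mathlib

section
/- Let V be the complexification of a real Hilbert space, U ⊆ V a one-dimensional subspace, and T : U → V a bounded linear operator with W(T) ⊆ {z ∈ ℂ : Re z ≥ 0}. Then there exists a bounded linear extension T̂ : V → V of T with ‖T̂‖ ≤ √2 ‖T‖ and W(T̂) ⊆ {z ∈ ℂ : Re z ≥ 0}. -/
open scoped InnerProductSpace

lemma pyth_aux {V : Type*} [NormedAddCommGroup V] [InnerProductSpace ℂ V]
    {e p : V} (hep : ⟪e, p⟫_ℂ = 0) (he : ‖e‖ = 1) (a b : ℂ) :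
    ‖a • e + b • p‖ ^ 2 = ‖a‖ ^ 2 + ‖b‖ ^ 2 * ‖p‖ ^ 2 := by
  have h0 : ⟪a • e, b • p⟫_ℂ = 0 := by
    rw [inner_smul_left, inner_smul_right, hep]; ring
  rw [norm_add_sq (𝕜 := ℂ), h0]
  simp [norm_smul, he]
  ring

set_option maxHeartbeats 1000000 in
/-- Let `V` be a complex Hilbert space (e.g. the complexification of a real Hilbert space),
`U ⊆ V` a one-dimensional subspace and `T : U → V` bounded linear with numerical range in the
closed right half-plane. Then `T` admits a bounded extension `T̂ : V → V` with
`‖T̂‖ ≤ √2 ‖T‖` and numerical range in the closed right half-plane. -/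
theorem stmt_3 {V : Type*} [NormedAddCommGroup V] [InnerProductSpace ℂ V] [CompleteSpace V]
    (U : Submodule ℂ V) (hU : Module.finrank ℂ U = 1) (T : U →L[ℂ] V)
    (hT : ∀ u : U, ‖u‖ = 1 → 0 ≤ (⟪T u, (u : V)⟫_ℂ).re) :
    ∃ That : V →L[ℂ] V, (∀ u : U, That u = T u) ∧ ‖That‖ ≤ Real.sqrt 2 * ‖T‖ ∧
      ∀ v : V, ‖v‖ = 1 → 0 ≤ (⟪That v, v⟫_ℂ).re := by
  obtain ⟨b, hb0, hbspan⟩ := finrank_eq_one_iff'.mp hU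
  have hbn : ‖b‖ ≠ 0 := norm_ne_zero_iff.mpr hb0
  set e0 : U := ((‖b‖ : ℂ))⁻¹ • b with he0def
  have he0 : ‖e0‖ = 1 := by
    rw [he0def, norm_smul]
    simp only [norm_inv, Complex.norm_real, Real.norm_eq_abs, abs_norm]
    exact inv_mul_cancel₀ hbn
  have hspan : ∀ u : U, ∃ c : ℂ, u = c • e0 := by
    intro u
    obtain ⟨c, hc⟩ := hbspan u
    refine ⟨c * ‖b‖, ?_⟩
    rw [he0def, smul_smul, mul_assoc, mul_inv_cancel₀ (by exact_mod_cast hbn), mul_one, hc]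
  set e : V := (e0 : V) with hedef
  have heV : ‖e‖ = 1 := he0
  set w : V := T e0 with hwdef
  set α : ℂ := ⟪e, w⟫_ℂ with hαdef
  set p : V := w - α • e with hpdef
  have hep : ⟪e, p⟫_ℂ = 0 := by
    rw [hpdef, inner_sub_right, inner_smul_right, inner_self_eq_norm_sq_to_K, heV]
    simp [hαdef]
  have hpe : ⟪p, e⟫_ℂ = 0 := by
    rw [← inner_conj_symm, hep, map_zero]
  have hw : w = α • e + p := by rw [hpdef]; abel
  have hα : 0 ≤ α.re := by
    have h := hT e0 he0
    have h2 : α = (starRingEnd ℂ) ⟪T e0, (e0 : V)⟫_ℂ := by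
      rw [hαdef, ← inner_conj_symm]
    rw [h2, Complex.conj_re]; exact h
  have hwnorm : ‖w‖ ≤ ‖T‖ := by
    calc ‖w‖ = ‖T e0‖ := rfl
      _ ≤ ‖T‖ * ‖e0‖ := T.le_opNorm e0
      _ = ‖T‖ := by rw [he0, mul_one]
  have hwsq : ‖w‖ ^ 2 = ‖α‖ ^ 2 + ‖p‖ ^ 2 := by
    have h := pyth_aux hep heV α 1
    rw [one_smul, ← hw] at h
    simpa using h
  set That : V →L[ℂ] V :=
    ((innerSL ℂ e).smulRight w) - ((innerSL ℂ p).smulRight e) with hThatdef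
  have hThat : ∀ v : V, That v = ⟪e, v⟫_ℂ • w - ⟪p, v⟫_ℂ • e := fun v => rfl
  refine ⟨That, ?_, ?_, ?_⟩
  · -- extension property
    intro u
    obtain ⟨c, hc⟩ := hspan u
    have hcu : (u : V) = c • e := by rw [hc]; rfl
    rw [hThat, hcu, inner_smul_right, inner_smul_right, hpe,
      inner_self_eq_norm_sq_to_K, heV]
    simp only [mul_zero, zero_smul, sub_zero]
    rw [hc, map_smul]
    simp [hwdef]
  · -- norm bound
    refine ContinuousLinearMap.opNorm_le_bound _ (by positivity) (fun v => ?_)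
    clear_value That
    clear_value p
    clear_value α
    clear_value w
    clear_value e
    clear_value e0
    obtain ⟨x, hxdef⟩ : ∃ x : ℂ, x = ⟪e, v⟫_ℂ := ⟨_, rfl⟩
    obtain ⟨y, hydef⟩ : ∃ y : ℂ, y = ⟪p, v⟫_ℂ := ⟨_, rfl⟩
    have hbessel : ‖x‖ ^ 2 * ‖p‖ ^ 2 + ‖y‖ ^ 2 ≤ ‖v‖ ^ 2 * ‖p‖ ^ 2 := by
      rcases eq_or_ne p 0 with hp0 | hp0
      · simp [hydef, hp0]
      · have hpn : (0:ℝ) < ‖p‖ := norm_pos_iff.mpr hp0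
        set f : Fin 2 → V := ![e, ((‖p‖ : ℂ))⁻¹ • p] with hfdef
        have hfp : ⟪f 1, v⟫_ℂ = ((‖p‖ : ℂ))⁻¹ * y := by
          simp [hfdef, inner_smul_left, Complex.conj_ofReal, ← hydef]
          exact mul_comm _ _
        have hpc : ((‖p‖ : ℝ) : ℂ) ≠ 0 := by exact_mod_cast hpn.ne'
        have hortho : Orthonormal ℂ f := by
          rw [orthonormal_iff_ite]
          intro i j
          have hf0' : f 0 = e := by simp [hfdef]
          have hf1' : f 1 = ((‖p‖ : ℂ))⁻¹ • p := by simp [hfdef]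
          fin_cases i <;> fin_cases j
          · show ⟪f 0, f 0⟫_ℂ = 1
            rw [hf0', inner_self_eq_norm_sq_to_K, heV]
            norm_num
          · simp [hf0', hf1', inner_smul_right, hep]
          · simp [hf0', hf1', inner_smul_left, hpe]
          · show ⟪f 1, f 1⟫_ℂ = 1
            rw [hf1', inner_smul_left, inner_smul_right,
              inner_self_eq_norm_sq_to_K, map_inv₀, Complex.conj_ofReal]
            norm_cast
            have h1 : ‖p‖⁻¹ * (‖p‖⁻¹ * ‖p‖ ^ 2) = 1 := by
              rw [← mul_assoc, ← mul_inv, ← pow_two, inv_mul_cancel₀ (pow_ne_zero 2 hpn.ne')]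
            change ((‖p‖⁻¹ : ℝ) : ℂ) * (((‖p‖⁻¹ : ℝ) : ℂ) * ((‖p‖ ^ 2 : ℝ) : ℂ)) = 1
            exact_mod_cast h1
        have hb := hortho.sum_inner_products_le v (s := Finset.univ)
        rw [Fin.sum_univ_two, hfp] at hb
        have hf0 : ⟪f 0, v⟫_ℂ = x := by simp [hfdef, ← hxdef]
        rw [hf0] at hb
        have hb2 : ‖x‖ ^ 2 + ‖p‖⁻¹ ^ 2 * ‖y‖ ^ 2 ≤ ‖v‖ ^ 2 := by
          have : ‖((‖p‖ : ℂ))⁻¹ * y‖ ^ 2 = ‖p‖⁻¹ ^ 2 * ‖y‖ ^ 2 := by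
            rw [norm_mul, mul_pow]
            norm_num
          rw [this] at hb
          exact hb
        have h3 : ‖p‖⁻¹ ^ 2 * ‖y‖ ^ 2 * ‖p‖ ^ 2 = ‖y‖ ^ 2 := by
          field_simp
        nlinarith [mul_le_mul_of_nonneg_right hb2 (sq_nonneg ‖p‖)]
    have hx : ‖x‖ ≤ ‖v‖ := by
      rw [hxdef]
      calc ‖⟪e, v⟫_ℂ‖ ≤ ‖e‖ * ‖v‖ := norm_inner_le_norm e v
        _ = ‖v‖ := by rw [heV, one_mul]
    have hTv : That v = (x * α - y) • e + x • p := by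
      rw [hThat, hw, ← hxdef, ← hydef, smul_add, smul_smul, sub_smul]
      abel
    have hTvsq : ‖That v‖ ^ 2 = ‖x * α - y‖ ^ 2 + ‖x‖ ^ 2 * ‖p‖ ^ 2 := by
      rw [hTv, pyth_aux hep heV]
    have hkey : ‖That v‖ ^ 2 ≤ 2 * ‖w‖ ^ 2 * ‖v‖ ^ 2 := by
      have h1 : ‖x * α - y‖ ≤ ‖x‖ * ‖α‖ + ‖y‖ := by
        calc ‖x * α - y‖ ≤ ‖x * α‖ + ‖y‖ := norm_sub_le _ _
          _ = ‖x‖ * ‖α‖ + ‖y‖ := by rw [norm_mul]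
      have h1' : ‖x * α - y‖ ^ 2 ≤ (‖x‖ * ‖α‖ + ‖y‖) ^ 2 := by
        have := norm_nonneg (x * α - y); nlinarith
      rw [hTvsq, hwsq]
      nlinarith [h1', hbessel, sq_nonneg (‖x‖ * ‖α‖ - ‖y‖),
        mul_le_mul_of_nonneg_right (mul_self_le_mul_self (norm_nonneg x) hx)
          (sq_nonneg ‖α‖),
        norm_nonneg x, norm_nonneg v, norm_nonneg α, norm_nonneg y, norm_nonneg p]
    have hfin : ‖That v‖ ≤ Real.sqrt 2 * ‖w‖ * ‖v‖ := by
      have h2 : ‖That v‖ ^ 2 ≤ (Real.sqrt 2 * ‖w‖ * ‖v‖) ^ 2 := by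
        rw [mul_pow, mul_pow, Real.sq_sqrt (by norm_num : (0:ℝ) ≤ 2)]
        exact hkey
      exact (pow_le_pow_iff_left₀ (norm_nonneg _) (by positivity) two_ne_zero).mp h2
    calc ‖That v‖ ≤ Real.sqrt 2 * ‖w‖ * ‖v‖ := hfin
      _ ≤ Real.sqrt 2 * ‖T‖ * ‖v‖ := by gcongr
  · -- numerical range
    intro v _
    clear_value That
    clear_value p
    clear_value α
    clear_value w
    clear_value e
    clear_value e0
    rw [hThat]
    obtain ⟨x, hxdef⟩ : ∃ x : ℂ, x = ⟪e, v⟫_ℂ := ⟨_, rfl⟩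
    obtain ⟨y, hydef⟩ : ∃ y : ℂ, y = ⟪p, v⟫_ℂ := ⟨_, rfl⟩
    have hcomp : ⟪⟪e, v⟫_ℂ • w - ⟪p, v⟫_ℂ • e, v⟫_ℂ
        = (starRingEnd ℂ) x * ((starRingEnd ℂ) α * x + y) - (starRingEnd ℂ) y * x := by
      rw [inner_sub_left, inner_smul_left, inner_smul_left, ← hxdef, ← hydef]
      congr 1
      rw [hw, inner_add_left, inner_smul_left, ← hxdef, ← hydef]
    rw [hcomp]
    have hre : ((starRingEnd ℂ) x * ((starRingEnd ℂ) α * x + y) - (starRingEnd ℂ) y * x).re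
        = α.re * Complex.normSq x := by
      simp [Complex.mul_re, Complex.sub_re, Complex.add_re, Complex.normSq]
      ring
    rw [hre]
    exact mul_nonneg hα (Complex.normSq_nonneg x)
end

section
/- Let V be the complexification of a real Hilbert space V_ℝ, let U ⊆ V be a one-dimensional subspace with U ∩ V_ℝ ≠ {0}, and let T : U → V be bounded linear with T(U ∩ V_ℝ) ⊆ V_ℝ and W(T) ⊆ {z ∈ ℂ : Re z ≥ ε} for some ε > 0. Then there exists a self-adjoint bounded extension T̂ : V → V of T with ‖T̂‖ ≤ √2 (‖T‖ + ε⁻¹‖T‖²) and numerical range W(T̂) ⊆ ℝ_{≥ 0}. -/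
open scoped InnerProductSpace ComplexConjugate

/-- Let `V` be the complexification of a real Hilbert space, encoded by a conjugation `J`
(an antilinear isometric involution), with real part `V_ℝ = {x | J x = x}`. Let `U ⊆ V` be a
one-dimensional subspace with `U ∩ V_ℝ ≠ 0` and `T : U → V` bounded with `T(U ∩ V_ℝ) ⊆ V_ℝ`
and numerical range contained in `{z : Re z ≥ ε}` for some `ε > 0`. Then there is a
self-adjoint bounded extension `T̂ : V → V` of `T` with `‖T̂‖ ≤ √2 (‖T‖ + ε⁻¹ ‖T‖²)` and
numerical range contained in `ℝ≥0`. -/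
theorem stmt_4 {V : Type*} [NormedAddCommGroup V] [InnerProductSpace ℂ V] [CompleteSpace V]
    (J : V →ₗ⋆[ℂ] V) (hJinv : ∀ x, J (J x) = x)
    (hJinner : ∀ x y : V, ⟪J x, J y⟫_ℂ = conj ⟪x, y⟫_ℂ)
    (U : Submodule ℂ V) (hU : Module.finrank ℂ U = 1)
    (hUreal : ∃ u₀ : U, (u₀ : V) ≠ 0 ∧ J (u₀ : V) = (u₀ : V))
    (T : U →L[ℂ] V) (hTreal : ∀ u : U, J (u : V) = (u : V) → J (T u) = T u)
    (ε : ℝ) (hε : 0 < ε)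
    (hT : ∀ u : U, ‖u‖ = 1 → ε ≤ (⟪T u, (u : V)⟫_ℂ).re) :
    ∃ That : V →L[ℂ] V, (∀ u : U, That u = T u) ∧
      (∀ x y : V, ⟪That x, y⟫_ℂ = ⟪x, That y⟫_ℂ) ∧
      ‖That‖ ≤ Real.sqrt 2 * (‖T‖ + ε⁻¹ * ‖T‖ ^ 2) ∧
      ∀ v : V, ‖v‖ = 1 → (⟪That v, v⟫_ℂ).im = 0 ∧ 0 ≤ (⟪That v, v⟫_ℂ).re := by
  obtain ⟨u₀, hu₀ne, hu₀J⟩ := hUreal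
  -- normalize u₀
  set c : ℝ := ‖(u₀ : V)‖⁻¹ with hc
  have hcpos : 0 < c := inv_pos.mpr (norm_pos_iff.mpr hu₀ne)
  set e : U := ((c : ℂ)) • u₀ with he
  have heV : (e : V) = (c : ℂ) • (u₀ : V) := rfl
  have heJ : J (e : V) = (e : V) := by
    rw [heV, map_smulₛₗ, hu₀J]
    norm_num
  have hnorm_e : ‖e‖ = 1 := by
    have : ‖e‖ = ‖(e : V)‖ := rfl
    rw [this, heV, norm_smul]
    simp [hc, norm_inv, norm_norm]
    exact inv_mul_cancel₀ (norm_ne_zero_iff.mpr hu₀ne)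
  have heV1 : ‖(e : V)‖ = 1 := hnorm_e
  have hene : e ≠ 0 := by
    intro h
    rw [h] at hnorm_e
    simp at hnorm_e
  set w : V := T e with hw
  have hwJ : J w = w := hTreal e heJ
  set α : ℂ := ⟪w, (e : V)⟫_ℂ with hα
  have hαre : ε ≤ α.re := by
    have := hT e hnorm_e
    simpa [hα, hw] using this
  have hαreal : conj α = α := by
    have := hJinner w (e : V)
    rw [hwJ, heJ] at this
    rw [hα, ← this]
  have hαim : α.im = 0 := by
    have := congrArg Complex.im hαreal
    simp at this
    linarith
  have hαeq : α = (α.re : ℂ) := by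
    exact Complex.ext (by simp) (by simp [hαim])
  have hαne : α ≠ 0 := by
    intro h
    rw [h] at hαre
    simp at hαre
    linarith
  have hwnorm : ‖w‖ ≤ ‖T‖ := by
    calc ‖w‖ = ‖T e‖ := rfl
    _ ≤ ‖T‖ * ‖e‖ := T.le_opNorm e
    _ = ‖T‖ := by rw [hnorm_e, mul_one]
  -- the extension
  set That : V →L[ℂ] V := α⁻¹ • ((innerSL ℂ w).smulRight w) with hThat
  have hThat_apply : ∀ v : V, That v = (α⁻¹ * ⟪w, v⟫_ℂ) • w := by
    intro v
    simp [hThat, smul_smul]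
  refine ⟨That, ?_, ?_, ?_, ?_⟩
  · -- extension property
    intro u
    obtain ⟨d, hd⟩ := (finrank_eq_one_iff_of_nonzero' e hene).mp hU u
    have hdV : (u : V) = d • (e : V) := by
      rw [← hd]; rfl
    have hTu : T u = d • w := by rw [← hd, map_smul, hw]
    rw [hThat_apply, hdV, hTu, inner_smul_right]
    rw [show α⁻¹ * (d * ⟪w, (e : V)⟫_ℂ) = d * (α⁻¹ * α) by rw [← hα]; ring]
    rw [inv_mul_cancel₀ hαne, mul_one]
  · -- self-adjoint
    intro x y
    rw [hThat_apply, hThat_apply, inner_smul_left, inner_smul_right]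
    rw [map_mul, ← inner_conj_symm x w, map_inv₀, hαreal]
    ring
  · -- norm bound
    have hb : ∀ v : V, ‖That v‖ ≤ ε⁻¹ * ‖T‖ ^ 2 * ‖v‖ := by
      intro v
      rw [hThat_apply, norm_smul, norm_mul, norm_inv]
      have h1 : ‖α‖ = α.re := by
        rw [hαeq]; simp [abs_of_nonneg (le_trans hε.le hαre)]
      have h2 : ‖⟪w, v⟫_ℂ‖ ≤ ‖w‖ * ‖v‖ := norm_inner_le_norm w v
      have h3 : ‖α‖⁻¹ ≤ ε⁻¹ := by
        rw [h1]; exact inv_anti₀ hε hαre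
      calc ‖α‖⁻¹ * ‖⟪w, v⟫_ℂ‖ * ‖w‖ ≤ ε⁻¹ * (‖w‖ * ‖v‖) * ‖w‖ := by
            exact mul_le_mul (mul_le_mul h3 h2 (norm_nonneg _) (le_of_lt (inv_pos.mpr hε)))
              le_rfl (norm_nonneg w) (by positivity)
        _ = ε⁻¹ * (‖w‖ * ‖w‖) * ‖v‖ := by ring
        _ ≤ ε⁻¹ * ‖T‖ ^ 2 * ‖v‖ := by
            apply mul_le_mul_of_nonneg_right _ (norm_nonneg v)
            apply mul_le_mul_of_nonneg_left _ (le_of_lt (inv_pos.mpr hε))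
            rw [pow_two]
            exact mul_le_mul hwnorm hwnorm (norm_nonneg w) (norm_nonneg T)
    have h4 : ‖That‖ ≤ ε⁻¹ * ‖T‖ ^ 2 := ContinuousLinearMap.opNorm_le_bound _ (by positivity) hb
    have h5 : (1 : ℝ) ≤ Real.sqrt 2 := by
      rw [show (1:ℝ) = Real.sqrt 1 by simp]
      exact Real.sqrt_le_sqrt (by norm_num)
    calc ‖That‖ ≤ ε⁻¹ * ‖T‖ ^ 2 := h4
      _ ≤ 1 * (‖T‖ + ε⁻¹ * ‖T‖ ^ 2) := by
          have : (0:ℝ) ≤ ‖T‖ := norm_nonneg T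
          nlinarith [inv_pos.mpr hε]
      _ ≤ Real.sqrt 2 * (‖T‖ + ε⁻¹ * ‖T‖ ^ 2) := by
          apply mul_le_mul_of_nonneg_right h5
          positivity
  · -- numerical range
    intro v _
    rw [hThat_apply, inner_smul_left]
    have key : (conj (α⁻¹ * ⟪w, v⟫_ℂ) * ⟪w, v⟫_ℂ) =
        ((α.re)⁻¹ * Complex.normSq ⟪w, v⟫_ℂ : ℝ) := by
      rw [map_mul, map_inv₀, hαreal, hαeq, mul_assoc,
        show conj ⟪w, v⟫_ℂ * ⟪w, v⟫_ℂ = (Complex.normSq ⟪w, v⟫_ℂ : ℂ) by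
          rw [mul_comm, Complex.mul_conj]]
      push_cast
      simp [Complex.ofReal_re, mul_comm]
    rw [key]
    constructor
    · simp
    · simp only [Complex.ofReal_re]
      exact mul_nonneg (inv_nonneg.mpr (le_trans hε.le hαre)) (Complex.normSq_nonneg _)
end

section
/- Let V be the complexification of a real Hilbert space, U ⊆ V a one-dimensional subspace, and b : U × V → ℂ a sesquilinear form such that |b(u,v)| ≤ M‖u‖‖v‖ and Re b(u,u) ≥ α‖u‖² for all u ∈ U, v ∈ V, where α, M > 0. Then b extends to a sesquilinear form a : V × V → ℂ satisfying |a(u,v)| ≤ [√2(M + α/2 + 2α⁻¹(M + α/2)²) + α/2]‖u‖‖v‖ and Re a(u,u) ≥ (α/2)‖u‖² for all u, v ∈ V. -/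
open scoped ComplexConjugate InnerProductSpace

set_option maxHeartbeats 1600000

/-- A bounded coercive sesquilinear form `b : U × V → ℂ` (linear in the first, conjugate-linear
in the second argument) defined on a one-dimensional subspace `U` of a complex Hilbert space `V`
extends to a sesquilinear form `a : V × V → ℂ` with
`|a(u,v)| ≤ [√2 (M + α/2 + 2 α⁻¹ (M + α/2)²) + α/2] ‖u‖ ‖v‖` and `Re a(u,u) ≥ (α/2) ‖u‖²`. -/
theorem stmt_6 {V : Type*} [NormedAddCommGroup V] [InnerProductSpace ℂ V] [CompleteSpace V]
    (U : Submodule ℂ V) (hU : Module.finrank ℂ U = 1)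
    (b : U →ₗ[ℂ] (V →ₗ⋆[ℂ] ℂ)) (M α : ℝ) (hM : 0 < M) (hα : 0 < α)
    (hbound : ∀ (u : U) (v : V), ‖b u v‖ ≤ M * ‖(u : V)‖ * ‖v‖)
    (hcoer : ∀ u : U, α * ‖(u : V)‖ ^ 2 ≤ (b u (u : V)).re) :
    ∃ a : V →ₗ[ℂ] (V →ₗ⋆[ℂ] ℂ),
      (∀ (u : U) (v : V), a (u : V) v = b u v) ∧
      (∀ u v : V, ‖a u v‖ ≤
        (Real.sqrt 2 * (M + α / 2 + 2 * α⁻¹ * (M + α / 2) ^ 2) + α / 2) * ‖u‖ * ‖v‖) ∧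
      (∀ u : V, α / 2 * ‖u‖ ^ 2 ≤ (a u u).re) := by
  haveI : FiniteDimensional ℂ U := Module.finite_of_finrank_eq_succ hU
  set P : V →L[ℂ] U := U.orthogonalProjectionOnto with hPdef
  -- Pythagoras for the projection
  have pyth : ∀ u : V, ‖u‖ ^ 2 = ‖(P u : V)‖ ^ 2 + ‖u - (P u : V)‖ ^ 2 := by
    intro u
    have horth : ⟪(P u : V), u - (P u : V)⟫_ℂ = 0 :=
      (Submodule.mem_orthogonal U _).mp (Submodule.sub_starProjection_mem_orthogonal (K := U) u) _
        (P u).2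
    have := norm_add_sq (𝕜 := ℂ) (P u : V) (u - (P u : V))
    rw [horth] at this
    simpa using this
  have hPle : ∀ u : V, ‖(P u : V)‖ ≤ ‖u‖ := by
    intro u
    have := pyth u
    nlinarith [norm_nonneg (P u : V), norm_nonneg u, sq_nonneg ‖u - (P u : V)‖]
  have hQle : ∀ u : V, ‖u - (P u : V)‖ ≤ ‖u‖ := by
    intro u
    have := pyth u
    nlinarith [norm_nonneg (u - (P u : V)), norm_nonneg u, sq_nonneg ‖(P u : V)‖]
  -- the extension
  refine ⟨LinearMap.mk₂'ₛₗ (RingHom.id ℂ) (starRingEnd ℂ)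
    (fun u v => b (P u) v - conj (b (P v) (u - (P u : V)))
      + (α / 2 : ℂ) * ⟪v - (P v : V), u - (P u : V)⟫_ℂ)
    ?_ ?_ ?_ ?_, ?_, ?_, ?_⟩
  · intro u₁ u₂ v
    simp only [map_add, Submodule.coe_add, LinearMap.add_apply]
    rw [show u₁ + u₂ - ((P u₁ : V) + (P u₂ : V))
        = (u₁ - (P u₁ : V)) + (u₂ - (P u₂ : V)) by abel]
    simp only [map_add, inner_add_right]
    ring
  · intro c u v
    simp only [map_smul, Submodule.coe_smul, LinearMap.smul_apply, RingHom.id_apply]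
    rw [show c • u - c • (P u : V) = c • (u - (P u : V)) by rw [smul_sub]]
    simp only [LinearMap.map_smulₛₗ, inner_smul_right, smul_eq_mul, map_mul,
      Complex.conj_conj, RingHom.id_apply, starRingEnd_self_apply]
    ring
  · intro u v₁ v₂
    simp only [map_add, Submodule.coe_add, LinearMap.add_apply]
    rw [show v₁ + v₂ - ((P v₁ : V) + (P v₂ : V))
        = (v₁ - (P v₁ : V)) + (v₂ - (P v₂ : V)) by abel]
    simp only [map_add, inner_add_left, LinearMap.add_apply]
    ring
  · intro c u v
    simp only [map_smul, Submodule.coe_smul, LinearMap.smul_apply, smul_eq_mul,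
      LinearMap.map_smulₛₗ, map_mul]
    rw [show c • v - c • (P v : V) = c • (v - (P v : V)) by rw [smul_sub]]
    simp only [inner_smul_left, smul_eq_mul, map_mul]
    ring
  · -- extension property
    intro u v
    have hPu : P (u : V) = u := Submodule.orthogonalProjectionOnto_mem_subspace_eq_self u
    simp [LinearMap.mk₂'ₛₗ_apply, hPu]
  · -- bound
    intro u v
    simp only [LinearMap.mk₂'ₛₗ_apply]
    have h1 : ‖b (P u) v‖ ≤ M * ‖u‖ * ‖v‖ := by
      calc ‖b (P u) v‖ ≤ M * ‖(P u : V)‖ * ‖v‖ := hbound _ _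
        _ ≤ M * ‖u‖ * ‖v‖ := by
            nlinarith [mul_nonneg (mul_nonneg hM.le (norm_nonneg v))
              (sub_nonneg.mpr (hPle u))]
    have h2 : ‖conj (b (P v) (u - (P u : V)))‖ ≤ M * ‖u‖ * ‖v‖ := by
      rw [RCLike.norm_conj]
      calc ‖b (P v) (u - (P u : V))‖ ≤ M * ‖(P v : V)‖ * ‖u - (P u : V)‖ := hbound _ _
        _ ≤ M * ‖u‖ * ‖v‖ := by
            nlinarith [mul_le_mul (hPle v) (hQle u) (norm_nonneg _) (norm_nonneg v),
              hM.le, mul_nonneg hM.le (mul_nonneg (norm_nonneg v) (norm_nonneg u))]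
    have h3 : ‖(α / 2 : ℂ) * ⟪v - (P v : V), u - (P u : V)⟫_ℂ‖ ≤ α / 2 * (‖u‖ * ‖v‖) := by
      rw [norm_mul]
      have := norm_inner_le_norm (𝕜 := ℂ) (v - (P v : V)) (u - (P u : V))
      have h4 := hQle u; have h5 := hQle v
      have : ‖⟪v - (P v : V), u - (P u : V)⟫_ℂ‖ ≤ ‖u‖ * ‖v‖ := by
        have := norm_nonneg (u - (P u : V)); have := norm_nonneg (v - (P v : V))
        nlinarith
      have habs : |α| = α := abs_of_pos hα
      have hnc : ‖(α / 2 : ℂ)‖ = α / 2 := by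
        simp [Complex.norm_real, habs]
      rw [hnc]
      have := norm_nonneg (⟪v - (P v : V), u - (P u : V)⟫_ℂ)
      nlinarith
    have key : ‖b (P u) v - conj (b (P v) (u - (P u : V)))
        + (α / 2 : ℂ) * ⟪v - (P v : V), u - (P u : V)⟫_ℂ‖
        ≤ (2 * M + α / 2) * (‖u‖ * ‖v‖) := by
      calc _ ≤ ‖b (P u) v - conj (b (P v) (u - (P u : V)))‖
            + ‖(α / 2 : ℂ) * ⟪v - (P v : V), u - (P u : V)⟫_ℂ‖ := norm_add_le _ _
        _ ≤ (‖b (P u) v‖ + ‖conj (b (P v) (u - (P u : V)))‖)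
            + ‖(α / 2 : ℂ) * ⟪v - (P v : V), u - (P u : V)⟫_ℂ‖ := by
            gcongr; exact norm_sub_le _ _
        _ ≤ (2 * M + α / 2) * (‖u‖ * ‖v‖) := by nlinarith
    refine key.trans ?_
    have hs2 : (1 : ℝ) ≤ Real.sqrt 2 := by
      rw [show (1:ℝ) = Real.sqrt 1 by simp]
      exact Real.sqrt_le_sqrt (by norm_num)
    have hαinv : α * α⁻¹ = 1 := mul_inv_cancel₀ hα.ne'
    have hconst : 2 * M + α / 2
        ≤ Real.sqrt 2 * (M + α / 2 + 2 * α⁻¹ * (M + α / 2) ^ 2) + α / 2 := by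
      have hinv : (0:ℝ) < α⁻¹ := inv_pos.mpr hα
      have h1 : M * α ≤ (M + α / 2) ^ 2 := by nlinarith [sq_nonneg (M - α / 2)]
      have h2 : 2 * α⁻¹ * (M * α) ≤ 2 * α⁻¹ * (M + α / 2) ^ 2 :=
        mul_le_mul_of_nonneg_left h1 (by positivity)
      have h3 : 2 * α⁻¹ * (M * α) = 2 * M := by field_simp
      have hbr : 2 * M ≤ M + α / 2 + 2 * α⁻¹ * (M + α / 2) ^ 2 := by
        nlinarith
      have hbpos : (0:ℝ) ≤ M + α / 2 + 2 * α⁻¹ * (M + α / 2) ^ 2 := by positivity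
      nlinarith [mul_le_mul_of_nonneg_right hs2 hbpos]
    have := mul_nonneg (norm_nonneg u) (norm_nonneg v)
    nlinarith
  · -- coercivity
    intro u
    rw [LinearMap.mk₂'ₛₗ_apply]
    set z₁ := (b (P u)) (P u : V) with hz₁
    set z₂ := (b (P u)) (u - (P u : V)) with hz₂
    have hsplit : (b (P u)) u = z₁ + z₂ := by
      rw [hz₁, hz₂, ← map_add]; congr 1; abel
    have him : (⟪u - (P u : V), u - (P u : V)⟫_ℂ).im = 0 := by
      rw [← RCLike.im_to_complex]; exact inner_self_im _
    have hrein : (⟪u - (P u : V), u - (P u : V)⟫_ℂ).re = ‖u - (P u : V)‖ ^ 2 := by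
      rw [← RCLike.re_to_complex]; exact inner_self_eq_norm_sq _
    rw [hsplit]
    have hre : (z₁ + z₂ - conj z₂ + (α / 2 : ℂ) * ⟪u - (P u : V), u - (P u : V)⟫_ℂ).re
        = z₁.re + α / 2 * ‖u - (P u : V)‖ ^ 2 := by
      rw [show (α / 2 : ℂ) = ((α / 2 : ℝ) : ℂ) by norm_num]
      simp [Complex.add_re, Complex.sub_re, Complex.conj_re, Complex.re_ofReal_mul,
        him, hrein]
      left; rw [← Complex.ofReal_pow, Complex.ofReal_re]
    rw [hre]
    have hc := hcoer (P u)
    have hp := pyth u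
    nlinarith [sq_nonneg ‖(P u : V)‖, sq_nonneg ‖u - (P u : V)‖]
end

section
/- For all s, t ∈ [0,T] with |t-s| ≤ 1, ∫₀¹ x^{-1/2} |sin(t x^{-3/2}) - sin(s x^{-3/2})|² dx ≤ (10/3)|t-s|; hence t ↦ sin(t x^{-3/2}) · x is (1/2)-Hölder continuous from [0,T] into L²((0,1); x^{-3/2}dx). -/
open MeasureTheory Set

/-- For all `s, t ∈ [0,T]` with `|t - s| ≤ 1`, with `c(x) = x` and weight `w(x) = x^(-3/2)`
(so that `w(x)|c(x)|² = x^(1/2)`),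
`∫₀¹ x^(-3/2) |x sin(t x^(-3/2)) - x sin(s x^(-3/2))|² dx ≤ (10/3) |t - s|`; hence
`t ↦ x sin(t x^(-3/2))` is `1/2`-Hölder continuous from `[0,T]` into `L²((0,1); x^(-3/2) dx)`. -/
theorem stmt_17 (T : ℝ) (hT : 0 < T) (s t : ℝ) (hs : s ∈ Icc 0 T) (ht : t ∈ Icc 0 T)
    (hst : |t - s| ≤ 1) :
    ∫ x in Ioc (0 : ℝ) 1,
        x ^ (-(3 : ℝ) / 2) *
          |x * Real.sin (t * x ^ (-(3 : ℝ) / 2)) - x * Real.sin (s * x ^ (-(3 : ℝ) / 2))| ^ 2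
      ≤ 10 / 3 * |t - s| := by
  rcases eq_or_lt_of_le (abs_nonneg (t - s)) with h0 | h0
  · have hts : t = s := by
      have h1 := abs_eq_zero.mp h0.symm
      have h2 := sub_eq_zero.mp h1
      linarith
    simp [hts]
  · set h : ℝ := |t - s| with hh_def
    set δ : ℝ := h ^ ((2:ℝ)/3) with hδ_def
    have hh1 : h ≤ 1 := hst
    have hδpos : 0 < δ := Real.rpow_pos_of_pos h0 _
    have hδ1 : δ ≤ 1 := Real.rpow_le_one h0.le hh1 (by norm_num)
    set g : ℝ → ℝ := fun x => if x ≤ δ then 4 * x ^ ((1:ℝ)/2) else h^2 * x ^ (-(5:ℝ)/2)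
      with hg_def
    -- integrability of g on the two pieces
    have hi1 : IntegrableOn (fun x : ℝ => 4 * x ^ ((1:ℝ)/2)) (Ioc 0 δ) := by
      exact ((intervalIntegral.intervalIntegrable_rpow' (a := 0) (b := δ)
        (r := (1:ℝ)/2) (by norm_num)).1).const_mul 4
    have hi2 : IntegrableOn (fun x : ℝ => h^2 * x ^ (-(5:ℝ)/2)) (Ioc δ 1) := by
      refine ((intervalIntegral.intervalIntegrable_rpow (a := δ) (b := 1) (μ := volume)
        (r := -(5:ℝ)/2) (Or.inr ?_)).1).const_mul _
      rw [Set.uIcc_of_le hδ1]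
      intro hmem
      exact absurd hmem.1 (not_le.mpr hδpos)
    have hg1 : IntegrableOn g (Ioc 0 δ) :=
      hi1.congr_fun (fun x hx => (if_pos hx.2).symm) measurableSet_Ioc
    have hg2 : IntegrableOn g (Ioc δ 1) :=
      hi2.congr_fun (fun x hx => (if_neg (not_le.mpr hx.1)).symm) measurableSet_Ioc
    have hunion : Ioc (0:ℝ) δ ∪ Ioc δ 1 = Ioc 0 1 :=
      Set.Ioc_union_Ioc_eq_Ioc hδpos.le hδ1
    have hgint : IntegrableOn g (Ioc 0 1) := by
      rw [← hunion]; exact hg1.union hg2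
    -- pointwise bound
    have hbound : ∀ x ∈ Ioc (0:ℝ) 1,
        x ^ (-(3 : ℝ) / 2) *
          |x * Real.sin (t * x ^ (-(3 : ℝ) / 2)) - x * Real.sin (s * x ^ (-(3 : ℝ) / 2))| ^ 2
          ≤ g x := by
      intro x hx
      have hxpos : 0 < x := hx.1
      set A := t * x ^ (-(3 : ℝ) / 2) with hA
      set B := s * x ^ (-(3 : ℝ) / 2) with hB
      have habs : |x * Real.sin A - x * Real.sin B| ^ 2
          = x ^ 2 * (Real.sin A - Real.sin B) ^ 2 := by
        rw [sq_abs]; ring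
      have hx2 : x ^ (-(3 : ℝ) / 2) * x ^ 2 = x ^ ((1:ℝ)/2) := by
        rw [← Real.rpow_natCast x 2, ← Real.rpow_add hxpos]
        norm_num
      have hrw : x ^ (-(3 : ℝ) / 2) *
          |x * Real.sin A - x * Real.sin B| ^ 2
          = x ^ ((1:ℝ)/2) * (Real.sin A - Real.sin B) ^ 2 := by
        rw [habs, ← mul_assoc, hx2]
      rw [hrw]
      by_cases hxδ : x ≤ δ
      · rw [hg_def]; simp only [if_pos hxδ]
        have hsin : (Real.sin A - Real.sin B) ^ 2 ≤ 4 := by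
          have h1 : |Real.sin A - Real.sin B| ≤ 2 := by
            calc |Real.sin A - Real.sin B| ≤ |Real.sin A| + |Real.sin B| := abs_sub _ _
            _ ≤ 1 + 1 := add_le_add (Real.abs_sin_le_one A) (Real.abs_sin_le_one B)
            _ = 2 := by norm_num
          calc (Real.sin A - Real.sin B) ^ 2 = |Real.sin A - Real.sin B| ^ 2 := (sq_abs _).symm
          _ ≤ 2 ^ 2 := by nlinarith [abs_nonneg (Real.sin A - Real.sin B)]
          _ = 4 := by norm_num
        have hx12 : (0:ℝ) ≤ x ^ ((1:ℝ)/2) := (Real.rpow_pos_of_pos hxpos _).le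
        nlinarith
      · rw [hg_def]; simp only [if_neg hxδ]
        have hlip : |Real.sin A - Real.sin B| ≤ |A - B| := by
          rw [Real.sin_sub_sin]
          calc |2 * Real.sin ((A - B) / 2) * Real.cos ((A + B) / 2)|
              = 2 * |Real.sin ((A - B) / 2)| * |Real.cos ((A + B) / 2)| := by
                rw [abs_mul, abs_mul, abs_two]
            _ ≤ 2 * |(A - B) / 2| * 1 := by
                have h1 : |Real.sin ((A - B) / 2)| ≤ |(A - B) / 2| := Real.abs_sin_le_abs
                have h2 : |Real.cos ((A + B) / 2)| ≤ 1 := Real.abs_cos_le_one _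
                nlinarith [abs_nonneg (Real.sin ((A - B) / 2)), abs_nonneg ((A - B) / 2),
                  abs_nonneg (Real.cos ((A + B) / 2))]
            _ = |A - B| := by rw [abs_div, abs_two]; ring
        have hAB : |A - B| = h * x ^ (-(3:ℝ)/2) := by
          rw [hh_def]
          have : A - B = (t - s) * x ^ (-(3:ℝ)/2) := by rw [hA, hB]; ring
          rw [this, abs_mul, abs_of_pos (Real.rpow_pos_of_pos hxpos _)]
        have hsin : (Real.sin A - Real.sin B) ^ 2 ≤ h^2 * (x ^ (-(3:ℝ)/2))^2 := by
          have h1 : |Real.sin A - Real.sin B| ≤ h * x ^ (-(3:ℝ)/2) := hAB ▸ hlip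
          calc (Real.sin A - Real.sin B) ^ 2 = |Real.sin A - Real.sin B| ^ 2 := (sq_abs _).symm
          _ ≤ (h * x ^ (-(3:ℝ)/2)) ^ 2 := by
              nlinarith [abs_nonneg (Real.sin A - Real.sin B)]
          _ = h^2 * (x ^ (-(3:ℝ)/2))^2 := by ring
        have hx52 : x ^ ((1:ℝ)/2) * (x ^ (-(3:ℝ)/2))^2 = x ^ (-(5:ℝ)/2) := by
          rw [← Real.rpow_natCast (x ^ (-(3:ℝ)/2)) 2, ← Real.rpow_mul hxpos.le,
            ← Real.rpow_add hxpos]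
          norm_num
        have hx12 : (0:ℝ) ≤ x ^ ((1:ℝ)/2) := (Real.rpow_pos_of_pos hxpos _).le
        calc x ^ ((1:ℝ)/2) * (Real.sin A - Real.sin B) ^ 2
            ≤ x ^ ((1:ℝ)/2) * (h^2 * (x ^ (-(3:ℝ)/2))^2) := by
              exact mul_le_mul_of_nonneg_left hsin hx12
          _ = h^2 * (x ^ ((1:ℝ)/2) * (x ^ (-(3:ℝ)/2))^2) := by ring
          _ = h^2 * x ^ (-(5:ℝ)/2) := by rw [hx52]
    -- main comparison
    have hmono : (∫ x in Ioc (0:ℝ) 1,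
        x ^ (-(3 : ℝ) / 2) *
          |x * Real.sin (t * x ^ (-(3 : ℝ) / 2)) - x * Real.sin (s * x ^ (-(3 : ℝ) / 2))| ^ 2)
        ≤ ∫ x in Ioc (0:ℝ) 1, g x := by
      refine integral_mono_of_nonneg ?_ hgint ?_
      · exact ae_restrict_of_forall_mem measurableSet_Ioc fun x hx => mul_nonneg (Real.rpow_nonneg hx.1.le _) (sq_nonneg _)
      · exact ae_restrict_of_forall_mem measurableSet_Ioc hbound
    refine hmono.trans ?_
    -- compute the g integral
    have hsplit : ∫ x in Ioc (0:ℝ) 1, g x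
        = (∫ x in Ioc (0:ℝ) δ, g x) + ∫ x in Ioc δ 1, g x := by
      rw [← hunion]
      exact setIntegral_union (Set.Ioc_disjoint_Ioc_of_le le_rfl) measurableSet_Ioc hg1 hg2
    have hI1 : ∫ x in Ioc (0:ℝ) δ, g x = 4 * ((2/3) * h) := by
      rw [setIntegral_congr_fun measurableSet_Ioc (fun x hx => if_pos hx.2),
        ← intervalIntegral.integral_of_le hδpos.le,
        intervalIntegral.integral_const_mul, integral_rpow (Or.inl (by norm_num))]
      have hδ32 : δ ^ ((1:ℝ)/2 + 1) = h := by
        rw [hδ_def, ← Real.rpow_mul h0.le]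
        norm_num
      rw [hδ32, Real.zero_rpow (by norm_num)]
      ring
    have hI2 : ∫ x in Ioc δ 1, g x = h^2 * ((2/3) * (h⁻¹ - 1)) := by
      rw [setIntegral_congr_fun measurableSet_Ioc (fun x hx => if_neg (not_le.mpr hx.1)),
        ← intervalIntegral.integral_of_le hδ1,
        intervalIntegral.integral_const_mul, integral_rpow (Or.inr ⟨by norm_num, ?_⟩)]
      · have hδ32 : δ ^ (-(5:ℝ)/2 + 1) = h⁻¹ := by
          rw [hδ_def, ← Real.rpow_mul h0.le]
          norm_num
          rw [Real.rpow_neg_one]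
        rw [hδ32, Real.one_rpow]
        ring
      · rw [Set.uIcc_of_le hδ1]
        intro hmem
        exact absurd hmem.1 (not_le.mpr hδpos)
    rw [hsplit, hI1, hI2]
    have hhinv : h^2 * h⁻¹ = h := by
      field_simp
    nlinarith [sq_nonneg h, h0]
end
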